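/- arXiv:2511.22376 — 8 statements merged into one kernel-verified Lean document; each statement's English description precedes it below -/
import Mathlib

section
/- The grounded extension of any argumentation framework is conflict-free: no argument in the grounded extension attacks another argument in the grounded extension. -/
def defenseFn {A : Type*} (att : A → A → Prop) (S : Set A) : Set A :=
  {x | ∀ y, att y x → ∃ z ∈ S, att z y}

/-- `Gr` is the grounded extension: the least fixed point of the defense function. -/
def IsGrounded {A : Type*} (att : A → A → Prop) (Gr : Set A) : Prop :=
  defenseFn att Gr = Gr ∧ ∀ S, defenseFn att S = S → Gr ⊆ S

/-- The grounded extension is conflict-free. -/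
theorem grounded_conflictFree {A : Type*} (att : A → A → Prop) (Gr : Set A)
    (hGr : IsGrounded att Gr) : ∀ x ∈ Gr, ∀ y ∈ Gr, ¬ att x y := by
  -- The defense function is monotone.
  set f : Set A →o Set A :=
    ⟨defenseFn att, fun S T hST x hx y hy => by
      obtain ⟨z, hz, hzy⟩ := hx y hy
      exact ⟨z, hST hz, hzy⟩⟩ with hf
  -- `P` : arguments not attacked by `Gr`.
  set P : Set A := {a | ¬ ∃ b ∈ Gr, att b a} with hP
  -- `P` is a prefixed point of `f`.
  have hpre : f P ≤ P := by
    intro x hx ⟨b, hbGr, hbx⟩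
    obtain ⟨z, hzP, hzb⟩ := hx b hbx
    have hbfix : b ∈ defenseFn att Gr := by rw [hGr.1]; exact hbGr
    obtain ⟨w, hwGr, hwz⟩ := hbfix z hzb
    exact hzP ⟨w, hwGr, hwz⟩
  -- `Gr` is contained in the least fixed point of `f`, which is ≤ `P`.
  have hGrL : Gr ⊆ OrderHom.lfp f := hGr.2 _ (OrderHom.map_lfp f)
  have hGrP : Gr ⊆ P := hGrL.trans (OrderHom.lfp_le f hpre)
  intro x hx y hy hxy
  exact hGrP hy ⟨x, hx, hxy⟩
end

section
/- In a finitary argumentation framework (each argument has only finitely many attackers), G_ω is a fixed point of the defense function; hence the grounding ordinal is at most ω. -/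
lemma defenseFn_mono {A : Type*} (att : A → A → Prop) {S T : Set A} (h : S ⊆ T) :
    defenseFn att S ⊆ defenseFn att T := by
  intro x hx y hy
  obtain ⟨z, hz, hzy⟩ := hx y hy
  exact ⟨z, h hz, hzy⟩

/-- In a finitary AF, `G ω` is a fixed point of the defense function, and it is
contained in every fixed point; hence the grounding ordinal is at most `ω`. -/
theorem finitary_grounding_at_omega {A : Type*} (att : A → A → Prop)
    (hfin : ∀ x : A, {y | att y x}.Finite)
    (Gn : ℕ → Set A) (h0 : Gn 0 = ∅) (hs : ∀ n, Gn (n + 1) = defenseFn att (Gn n)) :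
    defenseFn att (⋃ n, Gn n) = ⋃ n, Gn n ∧
      ∀ S : Set A, defenseFn att S = S → (⋃ n, Gn n) ⊆ S := by
  classical
  have hstep : ∀ n, Gn n ⊆ Gn (n + 1) := by
    intro n
    induction n with
    | zero => rw [h0]; exact Set.empty_subset _
    | succ k ih => rw [hs k, hs (k+1)]; exact defenseFn_mono att ih
  have hmono : ∀ {m n}, m ≤ n → Gn m ⊆ Gn n := by
    intro m n h
    induction h with
    | refl => exact subset_rfl
    | step h ih => exact ih.trans (hstep _)
  constructor
  · apply Set.Subset.antisymm
    · intro x hx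
      -- for each attacker y of x, choose a level containing a defender
      have hchoice : ∀ y ∈ {y | att y x}, ∃ n, ∃ z ∈ Gn n, att z y := by
        intro y hy
        obtain ⟨z, hz, hzy⟩ := hx y hy
        obtain ⟨n, hn⟩ := Set.mem_iUnion.mp hz
        exact ⟨n, z, hn, hzy⟩
      obtain ⟨f, hf⟩ := Classical.axiomOfChoice
        (fun y : {y // att y x} => hchoice y.1 y.2)
      obtain ⟨N, hN⟩ : ∃ N, ∀ y : {y // att y x}, f y ≤ N := by
        have : ((hfin x).toFinset.image (fun y => if h : att y x then f ⟨y, h⟩ else 0)).sup id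
            = _ := rfl
        refine ⟨((hfin x).toFinset.image (fun y => if h : att y x then f ⟨y, h⟩ else 0)).sup id,
          fun y => ?_⟩
        have hmem : (y : A) ∈ (hfin x).toFinset := by simp [y.2]
        have := Finset.le_sup (f := id)
          (Finset.mem_image_of_mem (fun y => if h : att y x then f ⟨y, h⟩ else 0) hmem)
        simpa [y.2] using this
      refine Set.mem_iUnion.mpr ⟨N + 1, ?_⟩
      rw [hs N]
      intro y hy
      obtain ⟨z, hz, hzy⟩ := hf ⟨y, hy⟩
      exact ⟨z, hmono (hN ⟨y, hy⟩) hz, hzy⟩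
    · refine Set.iUnion_subset fun n => (hstep n).trans ?_
      rw [hs n]
      exact defenseFn_mono att (Set.subset_iUnion Gn n)
  · intro S hS
    refine Set.iUnion_subset fun n => ?_
    induction n with
    | zero => rw [h0]; exact Set.empty_subset _
    | succ k ih => rw [hs k, ← hS]; exact defenseFn_mono att ih
end

section
/- If X is a self-defending set of arguments, then X is disjoint from G⁺, the set of arguments attacked by the grounded extension G. -/
/-- `X` is self-defending: every attacker of an element of `X` is attacked by an element of `X`. -/
def SelfDefending {A : Type*} (att : A → A → Prop) (X : Set A) : Prop :=
  ∀ y, (∃ x ∈ X, att y x) → ∃ x ∈ X, att x y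

def defenseHom {A : Type*} (att : A → A → Prop) : Set A →o Set A :=
  ⟨defenseFn att, fun S T hST x hx y hyx => by
    obtain ⟨z, hz, hzy⟩ := hx y hyx; exact ⟨z, hST hz, hzy⟩⟩

/-- A self-defending set is disjoint from `G⁺`, the set of arguments attacked by
the grounded extension. -/
theorem selfDefending_disjoint_Gplus {A : Type*} (att : A → A → Prop)
    (Gr : Set A) (hGr : IsGrounded att Gr) (X : Set A) (hX : SelfDefending att X) :
    Disjoint X {x | ∃ g ∈ Gr, att g x} := by
  set S : Set A := {x | ∀ y ∈ X, ¬ att x y} with hS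
  have hpre : defenseFn att S ⊆ S := by
    intro x hx y hyX hxy
    obtain ⟨w, hwX, hwx⟩ := hX x ⟨y, hyX, hxy⟩
    obtain ⟨z, hzS, hzw⟩ := hx w hwx
    exact hzS w hwX hzw
  have hGrS : Gr ⊆ S := by
    have h1 : Gr ⊆ OrderHom.lfp (defenseHom att) :=
      hGr.2 _ (OrderHom.map_lfp (defenseHom att))
    have h2 : OrderHom.lfp (defenseHom att) ≤ S := OrderHom.lfp_le _ hpre
    exact h1.trans h2
  rw [Set.disjoint_right]
  rintro x ⟨g, hg, hgx⟩ hxX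
  exact hGrS hg x hxX hgx
end

section
/- The complement of G⁺ (the set of arguments not attacked by the grounded extension) is itself a self-defending set; hence the largest self-defending extension is exactly the complement of G⁺. -/
lemma defenseFn_mono_s8 {A : Type*} (att : A → A → Prop) : Monotone (defenseFn att) := by
  intro S T hST x hx y hy
  obtain ⟨z, hz, hzy⟩ := hx y hy
  exact ⟨z, hST hz, hzy⟩

/-- `Gr` is contained in every prefixed point of the defense function. -/
lemma grounded_le_prefixed {A : Type*} (att : A → A → Prop) (Gr : Set A)
    (hGr : IsGrounded att Gr) (P : Set A) (hP : defenseFn att P ⊆ P) : Gr ⊆ P := by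
  set F : Set A →o Set A := ⟨defenseFn att, defenseFn_mono_s8 att⟩
  have h1 : Gr ⊆ OrderHom.lfp F := hGr.2 _ (OrderHom.map_lfp F)
  exact h1.trans (OrderHom.lfp_le F hP)

/-- The complement of `G⁺` is self-defending, and it is the largest
self-defending set. -/
theorem compl_Gplus_largest_selfDefending {A : Type*} (att : A → A → Prop)
    (Gr : Set A) (hGr : IsGrounded att Gr) :
    SelfDefending att ({x | ∃ g ∈ Gr, att g x}ᶜ) ∧
      ∀ X : Set A, SelfDefending att X → X ⊆ {x | ∃ g ∈ Gr, att g x}ᶜ := by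
  constructor
  · rintro y ⟨x, hx, hyx⟩
    by_contra h
    push_neg at h
    have hy : y ∈ defenseFn att Gr := by
      intro w hw
      have hwmem : w ∈ {x | ∃ g ∈ Gr, att g x} := by
        by_contra hw'
        exact h w hw' hw
      exact hwmem
    rw [hGr.1] at hy
    exact hx ⟨y, hy, hyx⟩
  · intro X hX x hxX hx
    -- P : arguments that attack no element of X
    have hP : defenseFn att {g | ∀ x ∈ X, ¬ att g x} ⊆ {g | ∀ x ∈ X, ¬ att g x} := by
      intro g hg x' hx' hgx'
      obtain ⟨x'', hx'', hx''g⟩ := hX g ⟨x', hx', hgx'⟩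
      obtain ⟨z, hz, hzx''⟩ := hg x'' hx''g
      exact hz x'' hx'' hzx''
    obtain ⟨g, hgGr, hgx⟩ := hx
    exact grounded_le_prefixed att Gr hGr _ hP hgGr x hxX hgx
end

section
/- In the AF F_T built from a tree T, the argument a_σ belongs to the grounded extension if and only if σ does not lie on an infinite path of T (equivalently, σ is ranked). -/
/-- A tree: a prefix-closed set of finite sequences of naturals. -/
def IsTree (T : Set (List ℕ)) : Prop := ∀ σ ∈ T, ∀ τ : List ℕ, τ <+: σ → τ ∈ T

/-- `RankLE T σ β` : `σ` is ranked in `T` with rank at most `β`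
(every child of `σ` in `T` has rank strictly less than `β`). -/
inductive RankLE (T : Set (List ℕ)) : List ℕ → Ordinal → Prop
  | intro (σ : List ℕ) (β : Ordinal) (g : ℕ → Ordinal)
      (hlt : ∀ n : ℕ, σ ++ [n] ∈ T → g n < β)
      (h : ∀ n : ℕ, σ ++ [n] ∈ T → RankLE T (σ ++ [n]) (g n)) : RankLE T σ β

/-- The AF `F_T` built from a tree `T`: arguments are `(false, σ)` (the `a_σ`'s)
and `(true, σ)` (the `b_σ`'s) for `σ ∈ T`; `b_σ` attacks `a_{σ⁻}` and `a_σ` attacks `b_σ`. -/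
def ftAtt (T : Set (List ℕ)) : Bool × List ℕ → Bool × List ℕ → Prop := fun x y =>
  (x.2 ∈ T ∧ x.1 = true ∧ y.1 = false ∧ x.2 ≠ [] ∧ y.2 = x.2.dropLast) ∨
  (x.2 ∈ T ∧ x.1 = false ∧ y.1 = true ∧ y.2 = x.2)

/-- `π` is an infinite path through the tree `T`. -/
def IsPath (T : Set (List ℕ)) (π : ℕ → ℕ) : Prop :=
  ∀ n : ℕ, (List.ofFn fun i : Fin n => π i) ∈ T

/-! ### Auxiliary lemmas -/

def Ranked (T : Set (List ℕ)) (σ : List ℕ) : Prop := ∃ β : Ordinal.{0}, RankLE T σ β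

lemma ofFn_succ_eq (f : ℕ → ℕ) (n : ℕ) :
    List.ofFn (fun i : Fin (n+1) => f i) = List.ofFn (fun i : Fin n => f i) ++ [f n] := by
  rw [List.ofFn_succ']; simp [List.concat_eq_append]

lemma ranked_of_children (T : Set (List ℕ)) (σ : List ℕ)
    (h : ∀ n, σ ++ [n] ∈ T → Ranked T (σ ++ [n])) : Ranked T σ := by
  classical
  have h' : ∀ n, ∃ β, σ ++ [n] ∈ T → RankLE T (σ ++ [n]) β := by
    intro n
    by_cases hn : σ ++ [n] ∈ T
    · obtain ⟨β, hβ⟩ := h n hn; exact ⟨β, fun _ => hβ⟩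
    · exact ⟨0, fun hn' => absurd hn' hn⟩
  choose g hg using h'
  refine ⟨Order.succ (⨆ n, g n), RankLE.intro σ _ g (fun n _ => ?_) (fun n hn => hg n hn)⟩
  exact lt_of_le_of_lt (le_ciSup (Ordinal.bddAbove_range g) n) (Order.lt_succ _)

lemma ranked_children {T : Set (List ℕ)} {σ : List ℕ} (h : Ranked T σ) :
    ∀ n, σ ++ [n] ∈ T → Ranked T (σ ++ [n]) := by
  obtain ⟨β, hβ⟩ := h
  cases hβ with
  | intro σ β g hlt hc => exact fun n hn => ⟨g n, hc n hn⟩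

lemma no_path_of_rankLE (T : Set (List ℕ)) {σ : List ℕ} {β : Ordinal}
    (h : RankLE T σ β) :
    ∀ π : ℕ → ℕ, IsPath T π → σ = List.ofFn (fun i : Fin σ.length => π i) → False := by
  induction h with
  | intro σ β g hlt hc ih =>
    intro π hπ hσ
    have hlen : (σ ++ [π σ.length]).length = σ.length + 1 := by simp
    have heq : σ ++ [π σ.length] = List.ofFn (fun i : Fin (σ.length + 1) => π i) := by
      rw [ofFn_succ_eq, ← hσ]
    have hchild : σ ++ [π σ.length] ∈ T := by rw [heq]; exact hπ (σ.length + 1)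
    refine ih (π σ.length) hchild π hπ ?_
    simp only [List.length_append, List.length_singleton]
    exact heq

lemma exists_path_of_not_ranked (T : Set (List ℕ)) (hT : IsTree T) {σ : List ℕ}
    (hσ : σ ∈ T) (h : ¬Ranked T σ) :
    ∃ π : ℕ → ℕ, IsPath T π ∧ σ = List.ofFn (fun i : Fin σ.length => π i) := by
  classical
  have step : ∀ τ : List ℕ, τ ∈ T → ¬Ranked T τ →
      ∃ n, τ ++ [n] ∈ T ∧ ¬Ranked T (τ ++ [n]) := by
    intro τ hτ hnr
    by_contra hc
    push_neg at hc
    exact hnr (ranked_of_children T τ fun n hn => hc n hn)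
  let next : {l : List ℕ // l ∈ T ∧ ¬Ranked T l} → {l : List ℕ // l ∈ T ∧ ¬Ranked T l} :=
    fun p => ⟨p.1 ++ [(step p.1 p.2.1 p.2.2).choose],
      (step p.1 p.2.1 p.2.2).choose_spec.1, (step p.1 p.2.1 p.2.2).choose_spec.2⟩
  let ρ : ℕ → {l : List ℕ // l ∈ T ∧ ¬Ranked T l} := fun k => next^[k] ⟨σ, hσ, h⟩
  have hρ0 : (ρ 0).1 = σ := rfl
  have hρsucc : ∀ k, ρ (k+1) = next (ρ k) := by
    intro k; simp [ρ, Function.iterate_succ_apply']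
  have hpref1 : ∀ k, (ρ k).1 <+: (ρ (k+1)).1 := by
    intro k; rw [hρsucc k]; exact ⟨_, rfl⟩
  have hpref : ∀ k m, k ≤ m → (ρ k).1 <+: (ρ m).1 := by
    intro k m hkm
    induction m with
    | zero => simp_all
    | succ m ihm =>
      rcases Nat.lt_or_ge k (m+1) with hlt | hge
      · exact (ihm (by omega)).trans (hpref1 m)
      · have : k = m + 1 := by omega
        subst this; exact List.prefix_refl _
  have hlen : ∀ k, (ρ k).1.length = σ.length + k := by
    intro k
    induction k with
    | zero => simp [hρ0]
    | succ k ihk => rw [hρsucc k]; simp [next, ihk]; omega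
  set π : ℕ → ℕ := fun n => (ρ (n+1)).1.getD n 0 with hπdef
  have hgetD : ∀ n k, n < k → π n = (ρ k).1.getD n 0 := by
    intro n k hnk
    have hp := hpref (n+1) k hnk
    have h1 : n < (ρ (n+1)).1.length := by rw [hlen]; omega
    have h2 : n < (ρ k).1.length := by rw [hlen]; omega
    simp only [hπdef, List.getD_eq_getElem _ _ h1, List.getD_eq_getElem _ _ h2]
    exact hp.getElem h1
  have hofFn : ∀ n, List.ofFn (fun i : Fin n => π i) = (ρ n).1.take n := by
    intro n
    apply List.ext_getElem
    · simp [hlen]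
    · intro i h1 h2
      simp only [List.getElem_ofFn, List.getElem_take]
      have hi : i < n := by simpa using h1
      have hin : i < (ρ n).1.length := by rw [hlen]; omega
      rcases Nat.lt_or_ge i (n-1) with _ | _
      · rw [hgetD i n hi, List.getD_eq_getElem _ _ hin]
      · rw [hgetD i n hi, List.getD_eq_getElem _ _ hin]
  refine ⟨π, ?_, ?_⟩
  · intro n
    rw [hofFn n]
    exact hT _ (ρ n).2.1 _ (List.take_prefix _ _)
  · rw [hofFn σ.length]
    obtain ⟨t, ht⟩ := hpref 0 σ.length (Nat.zero_le _)
    rw [hρ0] at ht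
    rw [← ht, List.take_left]

lemma mem_gr_of_rankLE {T : Set (List ℕ)} {Gr : Set (Bool × List ℕ)}
    (hfix : defenseFn (ftAtt T) Gr = Gr) {σ : List ℕ} {β : Ordinal}
    (h : RankLE T σ β) : (false, σ) ∈ Gr := by
  induction h with
  | intro σ β g hlt hc ih =>
    rw [← hfix]
    intro y hy
    rcases hy with ⟨hyT, hy1, _, hne, hdrop⟩ | ⟨_, _, habs, _⟩
    · refine ⟨(false, y.2), ?_, Or.inr ⟨hyT, rfl, hy1, rfl⟩⟩
      have hy2 : y.2 = σ ++ [y.2.getLast hne] := by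
        conv_lhs => rw [← List.dropLast_append_getLast hne]
        simp only at hdrop
        rw [hdrop]
      have := ih (y.2.getLast hne) (hy2 ▸ hyT)
      rwa [← hy2] at this
    · simp at habs

/-- In `F_T`, the argument `a_σ` belongs to the grounded extension iff no
infinite path of `T` extends `σ`. -/
theorem ft_grounded_iff_no_path (T : Set (List ℕ)) (hT : IsTree T)
    (Gr : Set (Bool × List ℕ)) (hGr : IsGrounded (ftAtt T) Gr)
    (σ : List ℕ) (hσ : σ ∈ T) :
    (false, σ) ∈ Gr ↔
      ¬ ∃ π : ℕ → ℕ, IsPath T π ∧ σ = List.ofFn (fun i : Fin σ.length => π i) := by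
  classical
  constructor
  · -- a_σ ∈ Gr → no path
    intro hmem ⟨π, hπ, hext⟩
    -- use the fixed point S to show σ is ranked
    set S : Set (Bool × List ℕ) :=
      {x | (x.1 = false ∧ (x.2 ∉ T ∨ Ranked T x.2)) ∨
           (x.1 = true ∧ (x.2 ∉ T ∨ ∃ n, x.2 ++ [n] ∈ T ∧ ¬Ranked T (x.2 ++ [n])))} with hSdef
    have hSfix : defenseFn (ftAtt T) S = S := by
      ext x
      obtain ⟨b, τ⟩ := x
      cases b
      · -- x = a_τ
        constructor
        · intro hx
          by_cases hτ : τ ∈ T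
          · refine Or.inl ⟨rfl, Or.inr (ranked_of_children T τ fun n hn => ?_)⟩
            obtain ⟨z, hzS, hzatt⟩ := hx (true, τ ++ [n])
              (Or.inl ⟨hn, rfl, rfl, by simp, by simp⟩)
            rcases hzatt with ⟨_, hz1, habs, _⟩ | ⟨hzT, hz1, _, hz2⟩
            · simp at habs
            · -- z = a_{τ++[n]}, z ∈ S
              obtain ⟨zb, zτ⟩ := z
              simp only at hz1 hz2
              subst hz1; subst hz2
              rcases hzS with ⟨_, hr⟩ | ⟨habs, _⟩
              · rcases hr with hnT | hr
                · exact absurd hn hnT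
                · exact hr
              · simp at habs
          · exact Or.inl ⟨rfl, Or.inl hτ⟩
        · intro hx y hy
          rcases hy with ⟨hyT, hy1, _, hne, hdrop⟩ | ⟨_, _, habs, _⟩
          · -- attacker y = b_{τ++[m]}; defend with a_{y.2}
            refine ⟨(false, y.2), ?_, Or.inr ⟨hyT, rfl, hy1, rfl⟩⟩
            have hy2 : y.2 = τ ++ [y.2.getLast hne] := by
              conv_lhs => rw [← List.dropLast_append_getLast hne]
              simp only at hdrop
              rw [hdrop]
            rcases hx with ⟨_, hr⟩ | ⟨habs, _⟩
            · rcases hr with hnT | hr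
              · exact absurd (hT _ hyT _ (hy2 ▸ ⟨[y.2.getLast hne], rfl⟩)) hnT
              · refine Or.inl ⟨rfl, Or.inr ?_⟩
                have := ranked_children hr (y.2.getLast hne) (hy2 ▸ hyT)
                rwa [← hy2] at this
            · simp at habs
          · simp at habs
      · -- x = b_τ
        constructor
        · intro hx
          by_cases hτ : τ ∈ T
          · -- a_τ attacks b_τ
            obtain ⟨z, hzS, hzatt⟩ := hx (false, τ) (Or.inr ⟨hτ, rfl, rfl, rfl⟩)
            -- z attacks a_τ: z = b_{τ++[m]}
            rcases hzatt with ⟨hzT, hz1, _, hne, hdrop⟩ | ⟨_, _, habs, _⟩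
            · obtain ⟨zb, zτ⟩ := z
              simp only at hz1 hdrop
              subst hz1
              simp only at hzT hne
              have hz2 : zτ = τ ++ [zτ.getLast hne] := by
                conv_lhs => rw [← List.dropLast_append_getLast hne]
                rw [hdrop]
              rcases hzS with ⟨habs, _⟩ | ⟨_, hr⟩
              · simp at habs
              · rcases hr with hnT | ⟨m, hm, hmnr⟩
                · exact absurd hzT hnT
                · -- zτ = τ ++ [k] has unranked child → zτ unranked → τ has unranked child
                  refine Or.inr ⟨rfl, Or.inr ⟨zτ.getLast hne, hz2 ▸ hzT, fun hr => ?_⟩⟩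
                  have := ranked_children (hz2 ▸ hr) m (hz2 ▸ hm)
                  exact hmnr (by rwa [← hz2] at this)
            · simp at habs
          · exact Or.inr ⟨rfl, Or.inl hτ⟩
        · intro hx y hy
          rcases hy with ⟨_, _, habs, _, _⟩ | ⟨hyT, hy1, _, hy2⟩
          · simp at habs
          · -- attacker y = a_τ with τ ∈ T
            simp only at hy2
            rcases hx with ⟨habs, _⟩ | ⟨_, hr⟩
            · simp at habs
            · rcases hr with hnT | ⟨n, hn, hnr⟩
              · simp only at hnT; rw [← hy2] at hyT; exact absurd hyT hnT
              · simp only at hn hnr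
                have hstep : ∃ m, (τ ++ [n]) ++ [m] ∈ T ∧ ¬Ranked T ((τ ++ [n]) ++ [m]) := by
                  by_contra hc
                  push_neg at hc
                  exact hnr (ranked_of_children T _ fun m hm => hc m hm)
                obtain ⟨m, hm, hmnr⟩ := hstep
                refine ⟨(true, τ ++ [n]), Or.inr ⟨rfl, Or.inr ⟨m, hm, hmnr⟩⟩, ?_⟩
                exact Or.inl ⟨hn, rfl, hy1, by simp, by simp [hy2]⟩
    have hsub := hGr.2 S hSfix
    have hxS := hsub hmem
    rcases hxS with ⟨_, hr⟩ | ⟨habs, _⟩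
    · rcases hr with hnT | ⟨β, hβ⟩
      · exact hnT hσ
      · exact no_path_of_rankLE T hβ π hπ hext
    · simp at habs
  · intro hnp
    by_cases hr : Ranked T σ
    · exact mem_gr_of_rankLE hGr.1 hr.choose_spec
    · exact absurd (exists_path_of_not_ranked T hT hσ hr) hnp
end

section
/- In the AF F_T built from a tree T, the argument b_σ belongs to G⁺ (is attacked by the grounded extension) if and only if σ is ranked in T. -/
/-- Child relation on a tree: `c` is a child of `p`. -/
def ftChild (T : Set (List ℕ)) (c p : List ℕ) : Prop := c ∈ T ∧ ∃ n : ℕ, c = p ++ [n]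

/-- No infinite descending chain from an accessible point. -/
lemma acc_no_desc {α : Type*} {r : α → α → Prop} {a : α} (h : Acc r a) :
    ∀ f : ℕ → α, f 0 = a → (∀ k, r (f (k+1)) (f k)) → False := by
  induction h with
  | intro x _ ih =>
    rintro f rfl hf
    exact ih _ (hf 0) (fun k => f (k+1)) rfl (fun k => hf (k+1))

/-- An infinite path through `σ` gives a descending chain, hence non-accessibility. -/
lemma acc_no_path (T : Set (List ℕ)) (σ : List ℕ) (hacc : Acc (ftChild T) σ)
    (hp : ∃ π : ℕ → ℕ, IsPath T π ∧ σ = List.ofFn (fun i : Fin σ.length => π i)) : False := by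
  obtain ⟨π, hπ, hσeq⟩ := hp
  refine acc_no_desc hacc (fun k => List.ofFn fun i : Fin (σ.length + k) => π i) hσeq.symm ?_
  intro k
  refine ⟨hπ _, π (σ.length + k), ?_⟩
  show (List.ofFn fun i : Fin (σ.length + k + 1) => π i)
      = (List.ofFn fun i : Fin (σ.length + k) => π i) ++ [π (σ.length + k)]
  rw [List.ofFn_succ']
  simp [List.concat_eq_append]

/-- Non-accessibility yields an infinite path. -/
lemma not_acc_path (T : Set (List ℕ)) (hT : IsTree T) (σ : List ℕ) (hσ : σ ∈ T)
    (hn : ¬ Acc (ftChild T) σ) :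
    ∃ π : ℕ → ℕ, IsPath T π ∧ σ = List.ofFn (fun i : Fin σ.length => π i) := by
  classical
  have step : ∀ p : {p : List ℕ // p ∈ T ∧ ¬ Acc (ftChild T) p},
      ∃ n : ℕ, (p.1 ++ [n]) ∈ T ∧ ¬ Acc (ftChild T) (p.1 ++ [n]) := by
    rintro ⟨p, hpT, hpn⟩
    by_contra hco
    push_neg at hco
    refine hpn (Acc.intro p ?_)
    rintro c ⟨hcT, n, rfl⟩
    exact hco n hcT
  let g : ℕ → {p : List ℕ // p ∈ T ∧ ¬ Acc (ftChild T) p} := fun k =>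
    Nat.rec ⟨σ, hσ, hn⟩ (fun _ p =>
      ⟨p.1 ++ [Classical.choose (step p)], (Classical.choose_spec (step p)).1,
        (Classical.choose_spec (step p)).2⟩) k
  have hgsucc : ∀ k, (g (k+1)).1 = (g k).1 ++ [Classical.choose (step (g k))] := fun k => rfl
  have hlen : ∀ k, (g k).1.length = σ.length + k := by
    intro k; induction k with
    | zero => rfl
    | succ k ih => rw [hgsucc, List.length_append, ih]; simp; ring
  have hpre : ∀ j k, j ≤ k → (g j).1 <+: (g k).1 := by
    intro j k hjk
    induction k with
    | zero => simp_all
    | succ k ih =>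
      rcases Nat.lt_or_ge j (k+1) with h | h
      · exact (ih (Nat.lt_succ_iff.mp h)).trans ⟨_, (hgsucc k).symm⟩
      · have : j = k + 1 := le_antisymm hjk h
        subst this; exact List.prefix_refl _
  set π : ℕ → ℕ := fun i => (g (i+1)).1.getD i 0 with hπdef
  have htake : ∀ j k, j ≤ k → (g j).1.take j = (g k).1.take j := by
    intro j k hjk
    obtain ⟨t, ht⟩ := hpre j k hjk
    rw [← ht, List.take_append_of_le_length (by have := hlen j; omega)]
  have hkey : ∀ n, (List.ofFn fun i : Fin n => π i) = (g n).1.take n := by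
    intro n
    induction n with
    | zero => simp
    | succ n ih =>
      rw [List.ofFn_succ']
      have h1 : (List.ofFn fun i : Fin n => π (i.castSucc)) = (g n).1.take n := by
        simpa using ih
      have hlt : n < (g (n+1)).1.length := by have := hlen (n+1); omega
      have h2 : (g (n+1)).1.take (n+1) = (g (n+1)).1.take n ++ [(g (n+1)).1.getD n 0] := by
        rw [List.take_succ, List.getElem?_eq_getElem hlt, List.getD_eq_getElem _ _ hlt]
        rfl
      rw [List.concat_eq_append, h1, htake n (n+1) (by omega), h2]
      rfl
  refine ⟨π, ?_, ?_⟩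
  · intro n
    rw [hkey]
    exact hT _ ((g n).2.1) _ (List.take_prefix _ _)
  · rw [hkey]
    have : σ <+: (g σ.length).1 := hpre 0 σ.length (Nat.zero_le _)
    obtain ⟨t, ht⟩ := this
    rw [← ht, List.take_left]

/-- Accessible nodes have their `a`-argument in the grounded extension. -/
lemma acc_a_mem (T : Set (List ℕ)) (Gr : Set (Bool × List ℕ))
    (hGr : IsGrounded (ftAtt T) Gr) :
    ∀ σ : List ℕ, Acc (ftChild T) σ → σ ∈ T → (false, σ) ∈ Gr := by
  intro σ hacc
  induction hacc with
  | intro σ _ ih =>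
    intro hσT
    rw [← hGr.1]
    rintro ⟨b, τ⟩ (⟨hτT, hb, _, hτne, hdrop⟩ | ⟨_, _, hfalse, _⟩)
    · -- τ is a child of σ
      dsimp only at hτT hb hτne hdrop
      subst hb
      have hτeq : τ = σ ++ [τ.getLast hτne] := by
        conv_lhs => rw [← List.dropLast_append_getLast hτne]
        rw [← hdrop]
      have hmem : (false, τ) ∈ Gr :=
        ih τ ⟨hτT, ⟨τ.getLast hτne, hτeq⟩⟩ hτT
      exact ⟨(false, τ), hmem, Or.inr ⟨hτT, rfl, rfl, rfl⟩⟩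
    · dsimp only at hfalse; simp at hfalse

/-- The set of "junk or accessible-a" arguments is a fixed point of the defense function. -/
lemma fixed_point_S (T : Set (List ℕ)) (hT : IsTree T) :
    defenseFn (ftAtt T)
      {x : Bool × List ℕ | x.2 ∉ T ∨ (x.1 = false ∧ Acc (ftChild T) x.2)} =
      {x : Bool × List ℕ | x.2 ∉ T ∨ (x.1 = false ∧ Acc (ftChild T) x.2)} := by
  ext ⟨b, τ⟩
  constructor
  · intro hx
    by_cases hτT : τ ∈ T
    · right
      cases b with
      | true =>
        exfalso
        obtain ⟨z, hzS, hzatt⟩ := hx (false, τ) (Or.inr ⟨hτT, rfl, rfl, rfl⟩)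
        rcases hzatt with ⟨hz1, hz2, _, _, hdrop⟩ | ⟨_, _, hco, _⟩
        · rcases hzS with hzS | ⟨hzf, _⟩
          · exact hzS hz1
          · rw [hz2] at hzf; simp at hzf
        · dsimp only at hco; simp at hco
      | false =>
        refine ⟨rfl, Acc.intro τ ?_⟩
        rintro c ⟨hcT, n, rfl⟩
        obtain ⟨z, hzS, hzatt⟩ := hx (true, τ ++ [n])
          (Or.inl ⟨hcT, rfl, rfl, by simp, by simp⟩)
        rcases hzatt with ⟨_, _, hco, _⟩ | ⟨hz1, hz2, _, hz4⟩
        · dsimp only at hco; simp at hco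
        · dsimp only at hz4
          rcases hzS with hzS | ⟨_, hzacc⟩
          · rw [← hz4] at hzS; exact absurd hcT hzS
          · rwa [← hz4] at hzacc
    · exact Or.inl hτT
  · rintro (hτT | ⟨hb, hacc⟩)
    · dsimp only at hτT
      intro y hy
      exfalso
      rcases hy with ⟨hyT, _, _, _, hdrop⟩ | ⟨hyT, _, _, heq⟩
      · dsimp only at hdrop
        exact hτT (hT _ hyT _ (hdrop ▸ List.dropLast_prefix _))
      · dsimp only at heq
        exact hτT (heq ▸ hyT)
    · dsimp only at hb hacc
      subst hb
      rintro ⟨c, ρ⟩ (⟨hρT, hc, _, hρne, hdrop⟩ | ⟨_, _, hco, _⟩)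
      · dsimp only at hρT hc hρne hdrop
        subst hc
        have hρeq : ρ = τ ++ [ρ.getLast hρne] := by
          conv_lhs => rw [← List.dropLast_append_getLast hρne]
          rw [← hdrop]
        have haccρ : Acc (ftChild T) ρ := hacc.inv ⟨hρT, ⟨_, hρeq⟩⟩
        exact ⟨(false, ρ), Or.inr ⟨rfl, haccρ⟩, Or.inr ⟨hρT, rfl, rfl, rfl⟩⟩
      · dsimp only at hco; simp at hco

/-- In `F_T`, the argument `b_σ` is attacked by the grounded extension iff `σ`
is ranked in `T`, i.e., no infinite path of `T` extends `σ`. -/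
theorem ft_b_in_Gplus_iff_ranked (T : Set (List ℕ)) (hT : IsTree T)
    (Gr : Set (Bool × List ℕ)) (hGr : IsGrounded (ftAtt T) Gr)
    (σ : List ℕ) (hσ : σ ∈ T) :
    (∃ g ∈ Gr, ftAtt T g (true, σ)) ↔
      ¬ ∃ π : ℕ → ℕ, IsPath T π ∧ σ = List.ofFn (fun i : Fin σ.length => π i) := by
  have h1 : (∃ g ∈ Gr, ftAtt T g (true, σ)) ↔ (false, σ) ∈ Gr := by
    constructor
    · rintro ⟨⟨b, τ⟩, hmem, ⟨_, _, hco, _⟩ | ⟨_, hb, _, heq⟩⟩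
      · dsimp only at hco; simp at hco
      · dsimp only at hb heq; subst hb; subst heq; exact hmem
    · intro h
      exact ⟨(false, σ), h, Or.inr ⟨hσ, rfl, rfl, rfl⟩⟩
  rw [h1]
  constructor
  · intro hmem hp
    have hsub := hGr.2 _ (fixed_point_S T hT)
    rcases hsub hmem with h | ⟨_, hacc⟩
    · exact h hσ
    · exact acc_no_path T σ hacc hp
  · intro hp
    have hacc : Acc (ftChild T) σ := by
      by_contra hn
      exact hp (not_acc_path T hT σ hσ hn)
    exact acc_a_mem T Gr hGr σ hacc hσ
end

section
/- Fix an enumeration (a_n) of the arguments of a countable AF and a finite set S of arguments. Consider the tree T_S where at a node σ of length ⟨n,m⟩ (under a pairing bijection): if a_n attacks some element of S ∪ {a_{σ(k)-1} : σ(k) ≥ 1}, the children of σ are exactly σ⌢(i+1) for those i with a_i attacking a_n; otherwise the unique child is σ⌢0. Then S is contained in a self-defending set if and only if T_S has an infinite path. -/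
/-- `ran_S(σ) = S ∪ {a_{σ(k)-1} : σ(k) ≥ 1}`. -/
def ranS {A : Type} (a : ℕ → A) (S : Set A) (σ : List ℕ) : Set A :=
  S ∪ {x | ∃ k : Fin σ.length, 1 ≤ σ.get k ∧ x = a (σ.get k - 1)}

/-- The branching rule of the tree `T_S` at a node `ρ` (with `n` the first
component of the unpairing of `|ρ|`): if `a_n` attacks some element of
`ran_S(ρ)`, the children are the `i+1` with `a_i` attacking `a_n`; otherwise
the unique child is `0`. -/
def stepOK {A : Type} (att : A → A → Prop) (a : ℕ → A) (S : Set A)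
    (ρ : List ℕ) (i : ℕ) : Prop :=
  ((∃ x ∈ ranS a S ρ, att (a (Nat.unpair ρ.length).1) x) ∧
      1 ≤ i ∧ att (a (i - 1)) (a (Nat.unpair ρ.length).1)) ∨
  ((¬ ∃ x ∈ ranS a S ρ, att (a (Nat.unpair ρ.length).1) x) ∧ i = 0)

/-- The tree `T_S`: all finite sequences each of whose steps obeys `stepOK`. -/
def TS {A : Type} (att : A → A → Prop) (a : ℕ → A) (S : Set A) : Set (List ℕ) :=
  {σ | ∀ (ρ : List ℕ) (i : ℕ), ρ ++ [i] <+: σ → stepOK att a S ρ i}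

lemma prefix_concat_cases {α : Type*} {l₁ l₂ : List α} {b : α} (h : l₁ <+: l₂ ++ [b]) :
    l₁ <+: l₂ ∨ l₁ = l₂ ++ [b] := by
  obtain ⟨t, ht⟩ := h
  rcases t.eq_nil_or_concat with rfl | ⟨t', c, rfl⟩
  · right; simpa using ht.symm.symm
  · left
    rw [List.concat_eq_append, ← List.append_assoc] at ht
    exact ⟨t', (List.append_inj' ht rfl).1⟩

lemma mem_ranS_concat {A : Type} (a : ℕ → A) (S : Set A) {x : A} {ρ : List ℕ} {i : ℕ} :
    x ∈ ranS a S (ρ ++ [i]) ↔ x ∈ ranS a S ρ ∨ (1 ≤ i ∧ x = a (i - 1)) := by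
  simp only [ranS, Set.mem_union, Set.mem_setOf_eq, List.get_eq_getElem, List.length_append,
    List.length_singleton]
  constructor
  · rintro (h | ⟨k, h1, h2⟩)
    · exact Or.inl (Or.inl h)
    · by_cases hk : (k : ℕ) < ρ.length
      · rw [List.getElem_append_left hk] at h1 h2
        exact Or.inl (Or.inr ⟨⟨k, hk⟩, h1, h2⟩)
      · have hk' : (k : ℕ) = ρ.length := by
          have := k.isLt; simp at this; omega
        rw [List.getElem_concat_length hk'] at h1 h2
        exact Or.inr ⟨h1, h2⟩
  · rintro ((h | ⟨k, h1, h2⟩) | ⟨h1, h2⟩)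
    · exact Or.inl h
    · refine Or.inr ⟨⟨k, by simp⟩, ?_, ?_⟩ <;>
        rw [List.getElem_append_left k.isLt] <;> assumption
    · refine Or.inr ⟨⟨ρ.length, by simp⟩, ?_, ?_⟩ <;>
        rw [List.getElem_concat_length rfl] <;> assumption

lemma ranS_nil {A : Type} (a : ℕ → A) (S : Set A) : ranS a S [] = S := by
  ext x; simp [ranS]

open scoped Classical in
/-- Choice of a good child at node `ρ`, given the target set `X`. -/
noncomputable def goodStep {A : Type} (att : A → A → Prop) (a : ℕ → A) (S : Set A)
    (X : Set A) (ρ : List ℕ) : ℕ :=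
  if h : ∃ i, a i ∈ X ∧ att (a i) (a (Nat.unpair ρ.length).1) ∧
      ∃ x ∈ ranS a S ρ, att (a (Nat.unpair ρ.length).1) x
  then h.choose + 1 else 0

/-- The sequence of initial segments of the path built from `X`. -/
noncomputable def seqF {A : Type} (att : A → A → Prop) (a : ℕ → A) (S : Set A)
    (X : Set A) : ℕ → List ℕ
  | 0 => []
  | n + 1 => seqF att a S X n ++ [goodStep att a S X (seqF att a S X n)]

lemma ofFn_succ_concat {π : ℕ → ℕ} (n : ℕ) :
    (List.ofFn fun i : Fin (n + 1) => π i) = (List.ofFn fun i : Fin n => π i) ++ [π n] := by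
  rw [List.ofFn_succ']
  simp [List.concat_eq_append]

/-- A finite set `S` of arguments is contained in a self-defending set iff the
tree `T_S` has an infinite path. -/
theorem subset_selfDefending_iff_path {A : Type} (att : A → A → Prop)
    (a : ℕ → A) (ha : Function.Surjective a) (S : Set A) (hS : S.Finite) :
    (∃ X : Set A, SelfDefending att X ∧ S ⊆ X) ↔
      ∃ π : ℕ → ℕ, IsPath (TS att a S) π := by
  constructor
  · rintro ⟨X, hX, hSX⟩
    set f := seqF att a S X with hf
    set π : ℕ → ℕ := fun n => goodStep att a S X (f n) with hπ
    have hinv : ∀ n, ranS a S (f n) ⊆ X := by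
      intro n
      induction n with
      | zero => rw [hf, seqF, ranS_nil]; exact hSX
      | succ n ih =>
        intro x hx
        rw [hf, seqF, ← hf, mem_ranS_concat] at hx
        rcases hx with hx | ⟨h1, h2⟩
        · exact ih hx
        · unfold goodStep at h1 h2
          by_cases hc : ∃ i, a i ∈ X ∧ att (a i) (a (Nat.unpair (f n).length).1) ∧
              ∃ x ∈ ranS a S (f n), att (a (Nat.unpair (f n).length).1) x
          · rw [dif_pos hc] at h2
            subst h2
            simpa using hc.choose_spec.1
          · rw [dif_neg hc] at h1
            omega
    have hstep : ∀ n, stepOK att a S (f n) (π n) := by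
      intro n
      show stepOK att a S (f n) (goodStep att a S X (f n))
      unfold goodStep
      by_cases h : ∃ i, a i ∈ X ∧ att (a i) (a (Nat.unpair (f n).length).1) ∧
          ∃ x ∈ ranS a S (f n), att (a (Nat.unpair (f n).length).1) x
      · rw [dif_pos h]
        obtain ⟨h1, h2, h3⟩ := h.choose_spec
        exact Or.inl ⟨h3, by omega, by simpa using h2⟩
      · rw [dif_neg h]
        refine Or.inr ⟨?_, rfl⟩
        rintro ⟨x, hx, hatt⟩
        obtain ⟨z, hz, hzatt⟩ := hX _ ⟨x, hinv n hx, hatt⟩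
        obtain ⟨i, rfl⟩ := ha z
        exact h ⟨i, hz, hzatt, x, hx, hatt⟩
    have hmemTS : ∀ n, f n ∈ TS att a S := by
      intro n
      induction n with
      | zero =>
        intro ρ i hpre
        rw [hf, seqF] at hpre
        simp [List.prefix_nil] at hpre
      | succ n ih =>
        intro ρ i hpre
        rw [hf, seqF, ← hf] at hpre
        rcases prefix_concat_cases hpre with h | h
        · exact ih ρ i h
        · obtain ⟨h1, h2⟩ := List.append_inj' h rfl
          obtain rfl := h1
          obtain rfl : i = π n := by simpa using h2
          exact hstep n
    refine ⟨π, fun n => ?_⟩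
    have hofn : ∀ n, (List.ofFn fun i : Fin n => π i) = f n := by
      intro n
      induction n with
      | zero => simp [hf, seqF]
      | succ n ih => rw [ofFn_succ_concat, ih, hf, seqF]
    rw [hofn n]
    exact hmemTS n
  · rintro ⟨π, hπ⟩
    refine ⟨S ∪ {x | ∃ k, 1 ≤ π k ∧ x = a (π k - 1)}, ?_, Set.subset_union_left⟩
    rintro y ⟨x, hxX, hatt⟩
    obtain ⟨n, rfl⟩ := ha y
    -- find L such that x ∈ ranS a S (σ_{Nat.pair n L})
    have key : ∃ L, x ∈ ranS a S (List.ofFn fun i : Fin (Nat.pair n L) => π i) := by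
      rcases hxX with hx | ⟨k, hk1, hk2⟩
      · exact ⟨0, Or.inl hx⟩
      · refine ⟨k + 1, Or.inr ?_⟩
        have hlt : k < Nat.pair n (k + 1) := by
          have := Nat.right_le_pair n (k + 1); omega
        refine ⟨⟨k, by simpa using hlt⟩, ?_, ?_⟩ <;>
          · simp only [List.get_eq_getElem, List.getElem_ofFn]
            simpa using (by assumption)
    obtain ⟨L, hxL⟩ := key
    set ℓ := Nat.pair n L with hℓ
    set ρ := (List.ofFn fun i : Fin ℓ => π i) with hρ
    have hlen : ρ.length = ℓ := by simp [hρ]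
    have hok : stepOK att a S ρ (π ℓ) := by
      have := hπ (ℓ + 1)
      rw [ofFn_succ_concat, ← hρ] at this
      exact this ρ (π ℓ) (List.prefix_refl _)
    have hn : (Nat.unpair ρ.length).1 = n := by rw [hlen, hℓ, Nat.unpair_pair]
    rcases hok with ⟨_, h1, h2⟩ | ⟨hno, _⟩
    · rw [hn] at h2
      exact ⟨a (π ℓ - 1), Or.inr ⟨ℓ, h1, rfl⟩, h2⟩
    · exact absurd ⟨x, hxL, by rwa [hn]⟩ hno
end

section
/- For any node ρ of the tree T_S, if ρ has rank at most α (in the well-founded part of T_S), then some element of G_{α+1} attacks some element of ran_S(ρ). -/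
/-- `G` is the transfinite iteration of the defense function from `∅`. -/
def IsIter {A : Type*} (att : A → A → Prop) (G : Ordinal → Set A) : Prop :=
  G 0 = ∅ ∧ (∀ β : Ordinal, G (β + 1) = defenseFn att (G β)) ∧
    ∀ l : Ordinal, Order.IsSuccLimit l → G l = ⋃ β ∈ Set.Iio l, G β

lemma iter_mono {A : Type*} {att : A → A → Prop} {G : Ordinal → Set A}
    (hG : IsIter att G) : ∀ γ β, β ≤ γ → G β ⊆ G γ := by
  have key : ∀ γ β, β < γ → G β ⊆ G γ := by
    intro γ
    induction γ using Ordinal.induction with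
    | h γ IH =>
      intro β hβ
      rcases Ordinal.zero_or_succ_or_isSuccLimit γ with h0 | ⟨δ, rfl⟩ | hl
      · exact absurd (h0 ▸ hβ) (not_lt_zero (a := β))
      · have hδγ : δ < Order.succ δ := Order.lt_succ δ
        have hinfl : G δ ⊆ defenseFn att (G δ) := by
          rcases Ordinal.zero_or_succ_or_isSuccLimit δ with h0 | ⟨ε, rfl⟩ | hl'
          · rw [h0, hG.1]; exact Set.empty_subset _
          · have hεδ : G ε ⊆ G (Order.succ ε) := IH _ hδγ _ (Order.lt_succ ε)
            have : G (Order.succ ε) = defenseFn att (G ε) := by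
              rw [← Ordinal.add_one_eq_succ, hG.2.1]
            exact this.subset.trans (defenseFn_mono att hεδ)
          · intro x hx
            rw [hG.2.2 δ hl'] at hx
            obtain ⟨_, ⟨ξ, rfl⟩, _, ⟨hξ, rfl⟩, hxξ⟩ := hx
            have hξδ : ξ + 1 < δ := by
              rw [Ordinal.add_one_eq_succ]; exact hl'.succ_lt hξ
            have hξξ : ξ < ξ + 1 := by
              rw [Ordinal.add_one_eq_succ]; exact Order.lt_succ ξ
            have hx1 : x ∈ G (ξ + 1) := IH (ξ + 1) (hξδ.trans hδγ) ξ hξξ hxξ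
            rw [hG.2.1] at hx1
            refine defenseFn_mono att ?_ hx1
            intro y hy
            rw [hG.2.2 δ hl']
            exact Set.mem_biUnion hξ hy
        have hsucc : G δ ⊆ G (Order.succ δ) := by
          rw [← Ordinal.add_one_eq_succ, hG.2.1]; exact hinfl
        rcases (Order.lt_succ_iff.mp hβ).lt_or_eq with h | h
        · exact (IH δ hδγ β h).trans hsucc
        · rw [h]; exact hsucc
      · intro x hx
        rw [hG.2.2 γ hl]
        exact Set.mem_biUnion hβ hx
  intro γ β hβ
  rcases hβ.lt_or_eq with h | h
  · exact key γ β h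
  · rw [h]

lemma mem_ranS_append {A : Type} (a : ℕ → A) (S : Set A) (σ : List ℕ) (i : ℕ)
    {x : A} (hx : x ∈ ranS a S (σ ++ [i])) :
    x ∈ ranS a S σ ∨ (1 ≤ i ∧ x = a (i - 1)) := by
  rcases hx with hx | ⟨k, h1, rfl⟩
  · exact Or.inl (Or.inl hx)
  · rcases lt_or_ge k.val σ.length with hk | hk
    · left; right
      refine ⟨⟨k.val, hk⟩, ?_, ?_⟩ <;>
      · have : (σ ++ [i]).get k = σ.get ⟨k.val, hk⟩ := by
          simp [List.get_eq_getElem, List.getElem_append_left hk]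
        simp_all
    · have hk2 : k.val = σ.length := by
        have := k.isLt
        simp only [List.length_append, List.length_singleton] at this
        omega
      have : (σ ++ [i]).get k = i := by
        have hle : σ.length ≤ k.val := le_of_eq hk2.symm
        simp [List.get_eq_getElem, List.getElem_append_right hle, hk2]
      right
      rw [this] at h1 ⊢
      exact ⟨h1, rfl⟩

lemma mem_TS_append {A : Type} {att : A → A → Prop} {a : ℕ → A} {S : Set A}
    {ρ : List ℕ} {i : ℕ} (hρ : ρ ∈ TS att a S) (h : stepOK att a S ρ i) :
    ρ ++ [i] ∈ TS att a S := by
  intro ρ' j hpre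
  rcases List.prefix_concat_iff.mp hpre with heq | hpre'
  · have hlen : ρ'.length = ρ.length := by
      have := congrArg List.length heq
      simp at this; omega
    obtain ⟨rfl, hji⟩ := List.append_inj heq hlen
    have : j = i := by simpa using hji
    rw [this]; exact h
  · exact hρ ρ' j hpre'

/-- If a node `ρ` of `T_S` has rank at most `α`, then some element of
`G_{α+1}` attacks some element of `ran_S(ρ)`. -/
theorem rank_attack {A : Type} (att : A → A → Prop)
    (a : ℕ → A) (ha : Function.Surjective a) (S : Set A) (hS : S.Finite)
    (G : Ordinal → Set A) (hG : IsIter att G)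
    (ρ : List ℕ) (hρ : ρ ∈ TS att a S) (α : Ordinal)
    (hrank : RankLE (TS att a S) ρ α) :
    ∃ g ∈ G (α + 1), ∃ x ∈ ranS a S ρ, att g x := by
  have mono := iter_mono hG
  clear hS
  induction hrank with
  | intro σ β g hlt hchild ih =>
    clear hchild
    by_cases hatt : ∃ x ∈ ranS a S σ, att (a (Nat.unpair σ.length).1) x
    · by_cases hdone : ∃ g' ∈ G β, ∃ x ∈ ranS a S σ, att g' x
      · obtain ⟨g', hg', x, hx, h⟩ := hdone
        exact ⟨g', mono (β + 1) β (le_self_add) hg', x, hx, h⟩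
      · have hn : a (Nat.unpair σ.length).1 ∈ G (β + 1) := by
          rw [hG.2.1]
          intro y hy
          obtain ⟨i, rfl⟩ := ha y
          have hstep : stepOK att a S σ (i + 1) := Or.inl ⟨hatt, by omega, by simpa using hy⟩
          have hmem : σ ++ [i + 1] ∈ TS att a S := mem_TS_append hρ hstep
          obtain ⟨g', hg', x, hx, hax⟩ := ih (i + 1) hmem hmem
          have hg'' : g' ∈ G β := by
            refine mono β (g (i + 1) + 1) ?_ hg'
            rw [Ordinal.add_one_eq_succ]
            exact Order.succ_le_of_lt (hlt (i + 1) hmem)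
          rcases mem_ranS_append a S σ (i + 1) hx with hx' | ⟨_, rfl⟩
          · exact absurd ⟨g', hg'', x, hx', hax⟩ hdone
          · exact ⟨g', hg'', by simpa using hax⟩
        obtain ⟨x, hx, h⟩ := hatt
        exact ⟨a (Nat.unpair σ.length).1, hn, x, hx, h⟩
    · have hstep : stepOK att a S σ 0 := Or.inr ⟨hatt, rfl⟩
      have hmem : σ ++ [0] ∈ TS att a S := mem_TS_append hρ hstep
      obtain ⟨g', hg', x, hx, hax⟩ := ih 0 hmem hmem
      have hg'' : g' ∈ G (β + 1) := by
        refine mono (β + 1) (g 0 + 1) ?_ hg'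
        exact add_le_add_left (hlt 0 hmem).le 1
      rcases mem_ranS_append a S σ 0 hx with hx' | ⟨h1, _⟩
      · exact ⟨g', hg'', x, hx', hax⟩
      · omega
end
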